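/- Let p be a prime, p > b ≥ 2 with gcd(p,b)=1, and g a unit mod p. Then the number of r ∈ {1,...,p-1} with ⌊b·r/p⌋ = ⌊b·(g·r mod p)/p⌋ equals the number of x ∈ {1,...,p-1} with x ≡ (g·x mod p) (mod b). -/

import Mathlib

lemma cast_mod_p (p b x : ℕ) (hp : 0 < p) :
    ((b * x % p : ℕ) : ZMod b) = -((p : ZMod b) * ((b * x / p : ℕ) : ZMod b)) := by
  have h : ((p * (b * x / p) + b * x % p : ℕ) : ZMod b) = ((b * x : ℕ) : ZMod b) := by
    rw [Nat.div_add_mod]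
  push_cast at h
  rw [ZMod.natCast_self] at h
  linear_combination h

lemma key (p b : ℕ) (hp : p.Prime) (hb : 2 ≤ b) (hbp : b < p) (hcop : ¬ p ∣ b)
    (r s : ℕ) (hr : r < p) (hs : s < p) :
    (b * r / p = b * s / p) ↔ ((b * r % p) % b = (b * s % p) % b) := by
  haveI : NeZero b := ⟨by omega⟩
  have hp0 : 0 < p := hp.pos
  have hu : b * r / p < b := Nat.div_lt_of_lt_mul (by nlinarith)
  have hv : b * s / p < b := Nat.div_lt_of_lt_mul (by nlinarith)
  constructor
  · intro h
    have hc : ((b * r % p : ℕ) : ZMod b) = ((b * s % p : ℕ) : ZMod b) := by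
      rw [cast_mod_p p b r hp0, cast_mod_p p b s hp0, h]
    exact (ZMod.natCast_eq_natCast_iff _ _ _).mp hc
  · intro h
    have hc : ((b * r % p : ℕ) : ZMod b) = ((b * s % p : ℕ) : ZMod b) :=
      (ZMod.natCast_eq_natCast_iff _ _ _).mpr h
    rw [cast_mod_p p b r hp0, cast_mod_p p b s hp0, neg_inj] at hc
    have hunit : IsUnit (p : ZMod b) := by
      rw [ZMod.isUnit_iff_coprime]
      exact (hp.coprime_iff_not_dvd).mpr hcop
    have h2 := hunit.mul_left_cancel hc
    have h3 : ((b * r / p : ℕ) : ZMod b).val = b * r / p := ZMod.val_cast_of_lt hu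
    have h4 : ((b * s / p : ℕ) : ZMod b).val = b * s / p := ZMod.val_cast_of_lt hv
    rw [← h3, ← h4, h2]

lemma modswap (p b g r : ℕ) : g * (b * r % p) % p = b * (g * r % p) % p := by
  calc g * (b * r % p) ≡ g * (b * r) [MOD p] := Nat.ModEq.mul_left g (Nat.mod_modEq _ _)
    _ = b * (g * r) := by ring
    _ ≡ b * (g * r % p) [MOD p] := (Nat.ModEq.mul_left b (Nat.mod_modEq _ _)).symm

lemma cond_equiv (p b g r : ℕ) (hp : p.Prime) (hb : 2 ≤ b) (hbp : b < p)
    (hcop : ¬ p ∣ b) (hr : r < p) :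
    (b * r / p = b * (g * r % p) / p) ↔
      ((b * r % p) % b = (g * (b * r % p) % p) % b) := by
  rw [modswap]
  exact key p b hp hb hbp hcop r (g * r % p) hr (Nat.mod_lt _ hp.pos)

theorem collision_congruence (p b g : ℕ) (hp : p.Prime) (hb : 2 ≤ b) (hbp : b < p)
    (hcop : ¬ p ∣ b) (hg : g ∈ Finset.Icc 1 (p - 1)) :
    ((Finset.Icc 1 (p - 1)).filter
      (fun r => b * r / p = b * (g * r % p) / p)).card =
    ((Finset.Icc 1 (p - 1)).filter
      (fun x => x % b = (g * x % p) % b)).card := by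
  haveI : Fact p.Prime := ⟨hp⟩
  have hp0 : 0 < p := hp.pos
  have hbu : IsUnit (b : ZMod p) := by
    rw [ZMod.isUnit_iff_coprime]
    exact ((hp.coprime_iff_not_dvd).mpr hcop).symm
  have hmem : ∀ r ∈ Finset.Icc 1 (p - 1), b * r % p ∈ Finset.Icc 1 (p - 1) := by
    intro r hr
    rw [Finset.mem_Icc] at hr ⊢
    have hlt : b * r % p < p := Nat.mod_lt _ hp0
    have hne : b * r % p ≠ 0 := by
      intro h0
      have hdvd : p ∣ b * r := Nat.dvd_of_mod_eq_zero h0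
      rcases (hp.dvd_mul.mp hdvd) with h | h
      · exact hcop h
      · have := Nat.le_of_dvd (by omega) h
        omega
    omega
  apply Finset.card_bij (fun r _ => b * r % p)
  · intro r hr
    rw [Finset.mem_filter] at hr ⊢
    have hrlt : r < p := by
      have := hr.1; rw [Finset.mem_Icc] at this; omega
    exact ⟨hmem r hr.1, (cond_equiv p b g r hp hb hbp hcop hrlt).mp hr.2⟩
  · intro r hr r' hr' heq
    rw [Finset.mem_filter, Finset.mem_Icc] at hr hr'
    have h1 : ((b * r % p : ℕ) : ZMod p) = ((b * r' % p : ℕ) : ZMod p) := by rw [heq]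
    rw [ZMod.natCast_mod, ZMod.natCast_mod] at h1
    push_cast at h1
    have h2 := hbu.mul_left_cancel h1
    have h3 : ((r : ℕ) : ZMod p).val = r := ZMod.val_cast_of_lt (by omega)
    have h4 : ((r' : ℕ) : ZMod p).val = r' := ZMod.val_cast_of_lt (by omega)
    rw [← h3, ← h4, h2]
  · intro x hx
    rw [Finset.mem_filter, Finset.mem_Icc] at hx
    obtain ⟨⟨hx1, hx2⟩, hxcond⟩ := hx
    set z : ZMod p := ↑(hbu.unit⁻¹) * (x : ZMod p) with hz
    have hb1 : (hbu.unit : ZMod p) * ↑(hbu.unit⁻¹) = 1 := Units.mul_inv _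
    rw [hbu.unit_spec] at hb1
    have hbz : (b : ZMod p) * z = (x : ZMod p) := by
      rw [hz, ← mul_assoc, hb1, one_mul]
    refine ⟨z.val, ?_, ?_⟩
    · rw [Finset.mem_filter, Finset.mem_Icc]
      have hzlt : z.val < p := ZMod.val_lt z
      have hzne : z.val ≠ 0 := by
        intro h0
        have : z = 0 := by
          have := ZMod.natCast_rightInverse (n := p) z
          rw [h0] at this
          simpa using this.symm
        rw [this, mul_zero] at hbz
        have hxp : x % p = 0 := by
          have h5 := ZMod.val_natCast (n := p) x
          rw [← hbz] at h5
          simpa using h5.symm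
        have h6 := Nat.le_of_dvd (by omega) (Nat.dvd_of_mod_eq_zero hxp)
        omega
      have hval : b * z.val % p = x := by
        have : ((b * z.val : ℕ) : ZMod p) = (x : ZMod p) := by
          push_cast
          rw [ZMod.natCast_rightInverse z, hbz]
        calc b * z.val % p = ((b * z.val : ℕ) : ZMod p).val := (ZMod.val_natCast _ _).symm
          _ = ((x : ℕ) : ZMod p).val := by rw [this]
          _ = x % p := ZMod.val_natCast _ _
          _ = x := Nat.mod_eq_of_lt (by omega)
      refine ⟨⟨by omega, by omega⟩, ?_⟩
      rw [cond_equiv p b g z.val hp hb hbp hcop hzlt, hval]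
      exact hxcond
    · -- b * z.val % p = x
      have : ((b * z.val : ℕ) : ZMod p) = (x : ZMod p) := by
        push_cast
        rw [ZMod.natCast_rightInverse z, hbz]
      calc b * z.val % p = ((b * z.val : ℕ) : ZMod p).val := (ZMod.val_natCast _ _).symm
        _ = ((x : ℕ) : ZMod p).val := by rw [this]
        _ = x % p := ZMod.val_natCast _ _
        _ = x := Nat.mod_eq_of_lt (by omega)
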